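/- arXiv:1402.5584 — 2 statements merged into one kernel-verified Lean document; each statement's English description precedes it below -/
import Mathlib

section
/- Residual decrement at a superset of the true support is a rank-one projection of the noise. Let y = Xβ* + w with supp(β*) ⊆ S ⊆ {1,…,p}, and let j ∉ S be such that X_{S∪{j}} has full column rank. Then ‖Π⊥[S] y‖₂² − ‖Π⊥[S∪{j}] y‖₂² = ‖P_j w‖₂², where P_j is the orthogonal projection of ℝⁿ onto the one-dimensional span of Π⊥[S] X_j. In particular, if X_{S*∪{j}} has full column rank for every j ∉ S*, then Δ(S*) = max_{j∉S*} ‖P_j w‖₂² with P_j the rank-one orthogonal projection onto span(Π⊥[S*] X_j). -/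
open scoped RealInnerProductSpace

/-- `Π⊥[S] v`: the orthogonal projection of `v` onto the orthogonal complement of the
column span of the columns of `X` indexed by `S` (so `Π⊥[∅] = id`). -/
noncomputable def projPerp {n p : ℕ} (X : Fin p → EuclideanSpace ℝ (Fin n))
    (S : Finset (Fin p)) (v : EuclideanSpace ℝ (Fin n)) : EuclideanSpace ℝ (Fin n) :=
  v - (Submodule.orthogonalProjectionOnto (Submodule.span ℝ (X '' ↑S)) v : EuclideanSpace ℝ (Fin n))

/-- `Δ(S) = max_{j ∉ S} (‖Π⊥[S] y‖² − ‖Π⊥[S∪{j}] y‖²)`. -/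
noncomputable def pathDelta {n p : ℕ} (X : Fin p → EuclideanSpace ℝ (Fin n))
    (S : Finset (Fin p)) (y : EuclideanSpace ℝ (Fin n)) : ℝ :=
  ⨆ j : {j : Fin p // j ∉ S}, (‖projPerp X S y‖ ^ 2 - ‖projPerp X (insert j.1 S) y‖ ^ 2)

section Aux

variable {E : Type*} [NormedAddCommGroup E] [InnerProductSpace ℝ E]

/-- Pythagoras: `‖u - proj_K u‖² = ‖u‖² - ‖proj_K u‖²`. -/
lemma norm_sub_orthogonalProjection_sq (K : Submodule ℝ E) [Submodule.HasOrthogonalProjection K]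
    (u : E) :
    ‖u - (Submodule.orthogonalProjectionOnto K u : E)‖ ^ 2 = ‖u‖ ^ 2 - ‖(Submodule.orthogonalProjectionOnto K u : E)‖ ^ 2 := by
  have h := Submodule.norm_sq_eq_add_norm_sq_projection u K
  have h2 : u - (Submodule.orthogonalProjectionOnto K u : E) = (Submodule.orthogonalProjectionOnto Kᗮ u : E) := by
    have : (Submodule.orthogonalProjectionOnto K u : E) + (Submodule.orthogonalProjectionOnto Kᗮ u : E) = u :=
      Submodule.starProjection_add_starProjection_orthogonal (K := K) u
    linear_combination (norm := module) -this
  rw [h2]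
  have : ‖Submodule.orthogonalProjectionOnto K u‖ = ‖(Submodule.orthogonalProjectionOnto K u : E)‖ := rfl
  have h3 : ‖Submodule.orthogonalProjectionOnto Kᗮ u‖ = ‖(Submodule.orthogonalProjectionOnto Kᗮ u : E)‖ := rfl
  rw [this, h3] at h
  linarith

/-- Projection onto `K ⊔ span{x}` decomposes as projection onto `K` plus projection onto
the span of `x - proj_K x`. -/
lemma orthogonalProjection_sup_span (K : Submodule ℝ E) [Submodule.HasOrthogonalProjection K]
    (x : E) (w : E)
    [Submodule.HasOrthogonalProjection (K ⊔ Submodule.span ℝ {x})]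
    [Submodule.HasOrthogonalProjection (Submodule.span ℝ {x - (Submodule.orthogonalProjectionOnto K x : E)})] :
    (Submodule.orthogonalProjectionOnto (K ⊔ Submodule.span ℝ {x}) w : E)
      = (Submodule.orthogonalProjectionOnto K w : E)
        + (Submodule.orthogonalProjectionOnto (Submodule.span ℝ {x - (Submodule.orthogonalProjectionOnto K x : E)}) w : E) := by
  set v : E := x - (Submodule.orthogonalProjectionOnto K x : E) with hv
  have hvK : v ∈ Kᗮ := Submodule.sub_starProjection_mem_orthogonal x
  set a : E := (Submodule.orthogonalProjectionOnto K w : E)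
  set b : E := (Submodule.orthogonalProjectionOnto (Submodule.span ℝ {v}) w : E)
  have haK : a ∈ K := (Submodule.orthogonalProjectionOnto K w).2
  have hbv : b ∈ Submodule.span ℝ {v} := (Submodule.orthogonalProjectionOnto (Submodule.span ℝ {v}) w).2
  have hbK : b ∈ Kᗮ := (Submodule.span_le.mpr (by simpa using hvK)) hbv
  rw [← Submodule.starProjection_apply]
  apply Submodule.eq_starProjection_of_mem_of_inner_eq_zero
  · apply Submodule.add_mem
    · exact Submodule.mem_sup_left haK
    · have hvmem : v ∈ K ⊔ Submodule.span ℝ {x} := by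
        apply Submodule.sub_mem
        · exact Submodule.mem_sup_right (Submodule.mem_span_singleton_self x)
        · exact Submodule.mem_sup_left (Submodule.orthogonalProjectionOnto K x).2
      exact (Submodule.span_le.mpr (by simpa using hvmem)) hbv
  · intro u hu
    have hKperp : w - (a + b) ∈ Kᗮ := by
      have h1 : w - a ∈ Kᗮ := Submodule.sub_starProjection_mem_orthogonal w
      have h2 : w - (a + b) = (w - a) - b := by abel
      rw [h2]; exact Submodule.sub_mem _ h1 hbK
    have hxperp : ⟪w - (a + b), x⟫ = 0 := by
      have hx : x = v + (Submodule.orthogonalProjectionOnto K x : E) := by simp [hv]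
      rw [hx, inner_add_right]
      have h1 : ⟪w - (a + b), (Submodule.orthogonalProjectionOnto K x : E)⟫ = 0 := by
        rw [real_inner_comm]; exact hKperp _ (Submodule.orthogonalProjectionOnto K x).2
      have h2 : ⟪w - (a + b), v⟫ = 0 := by
        have hwb : ⟪w - b, v⟫ = 0 :=
          Submodule.starProjection_inner_eq_zero (K := Submodule.span ℝ {v}) w v (Submodule.mem_span_singleton_self v)
        have hav : ⟪a, v⟫ = 0 := hvK a haK
        have h3 : w - (a + b) = (w - b) - a := by abel
        rw [h3, inner_sub_left, hwb, hav]; ring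
      rw [h1, h2]; ring
    -- u ∈ K ⊔ span{x}
    rcases Submodule.mem_sup.mp hu with ⟨k, hk, s, hs, rfl⟩
    rcases Submodule.mem_span_singleton.mp hs with ⟨c, rfl⟩
    have hk0 : ⟪w - (a + b), k⟫ = 0 := by rw [real_inner_comm]; exact hKperp k hk
    rw [inner_add_right, hk0, real_inner_smul_right, hxperp]
    ring

lemma orthogonalProjection_congr {K K' : Submodule ℝ E} [Submodule.HasOrthogonalProjection K]
    [Submodule.HasOrthogonalProjection K'] (h : K = K') (v : E) :
    (Submodule.orthogonalProjectionOnto K v : E) = (Submodule.orthogonalProjectionOnto K' v : E) := by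
  subst h; rfl

end Aux

/-- **Residual decrement at a superset of the true support is a rank-one projection of the
noise.**  If `y = Xβ* + w`, `supp β* ⊆ S` and `j ∉ S` with `X_{S∪{j}}` of full column rank,
then `‖Π⊥[S] y‖² − ‖Π⊥[S∪{j}] y‖² = ‖P_j w‖²`, where `P_j` is the orthogonal projection
onto the one-dimensional span of `Π⊥[S] X_j`.  In particular, if `X_{S*∪{j}}` has full
column rank for every `j ∉ S*`, then `Δ(S*) = max_{j ∉ S*} ‖P_j w‖²`. -/
theorem residual_decrement_eq_rank_one_projection {n p : ℕ}
    (X : Fin p → EuclideanSpace ℝ (Fin n)) (β : Fin p → ℝ)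
    (w y : EuclideanSpace ℝ (Fin n))
    (hy : y = (∑ j, β j • X j) + w)
    (Sstar : Finset (Fin p)) (hSstar : ∀ j, j ∈ Sstar ↔ β j ≠ 0) :
    (∀ (S : Finset (Fin p)) (j : Fin p), Sstar ⊆ S → j ∉ S →
        LinearIndependent ℝ (fun i : ((insert j S : Finset (Fin p)) : Set (Fin p)) => X i) →
        ‖projPerp X S y‖ ^ 2 - ‖projPerp X (insert j S) y‖ ^ 2
          = ‖(Submodule.orthogonalProjectionOnto (ℝ ∙ projPerp X S (X j)) w : EuclideanSpace ℝ (Fin n))‖ ^ 2)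
    ∧ ((∀ j ∉ Sstar,
          LinearIndependent ℝ
            (fun i : ((insert j Sstar : Finset (Fin p)) : Set (Fin p)) => X i)) →
        pathDelta X Sstar y
          = ⨆ j : {j : Fin p // j ∉ Sstar},
              ‖(Submodule.orthogonalProjectionOnto (ℝ ∙ projPerp X Sstar (X j.1)) w :
                  EuclideanSpace ℝ (Fin n))‖ ^ 2) := by
  have main : ∀ (S : Finset (Fin p)) (j : Fin p), Sstar ⊆ S →
      ‖projPerp X S y‖ ^ 2 - ‖projPerp X (insert j S) y‖ ^ 2
        = ‖(Submodule.orthogonalProjectionOnto (ℝ ∙ projPerp X S (X j)) w : EuclideanSpace ℝ (Fin n))‖ ^ 2 := by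
    intro S j hSS
    set K : Submodule ℝ (EuclideanSpace ℝ (Fin n)) := Submodule.span ℝ (X '' ↑S) with hK
    set K' : Submodule ℝ (EuclideanSpace ℝ (Fin n)) :=
      Submodule.span ℝ (X '' ↑(insert j S)) with hK'
    -- The mean `∑ β j • X j` lies in `K`.
    have hmK : (∑ i, β i • X i) ∈ K := by
      apply Submodule.sum_mem
      intro i _
      by_cases hb : β i = 0
      · simp [hb]
      · exact Submodule.smul_mem _ _ (Submodule.subset_span
          ⟨i, Finset.mem_coe.mpr (hSS ((hSstar i).mpr hb)), rfl⟩)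
    have hmK' : (∑ i, β i • X i) ∈ K' := by
      have hle : K ≤ K' := Submodule.span_mono (Set.image_mono (by simp [Finset.coe_insert]))
      exact hle hmK
    -- projPerp of y equals projPerp of w
    have hperp : ∀ (M : Submodule ℝ (EuclideanSpace ℝ (Fin n)))
        [Submodule.HasOrthogonalProjection M], (∑ i, β i • X i) ∈ M →
        y - (Submodule.orthogonalProjectionOnto M y : EuclideanSpace ℝ (Fin n))
          = w - (Submodule.orthogonalProjectionOnto M w : EuclideanSpace ℝ (Fin n)) := by
      intro M _ hm
      rw [hy, map_add, Submodule.coe_add, ← Submodule.starProjection_apply M (∑ i, β i • X i),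
      Submodule.starProjection_eq_self_iff.mpr hm]
      abel
    have e1 : projPerp X S y = projPerp X S w := hperp K hmK
    have e2 : projPerp X (insert j S) y = projPerp X (insert j S) w := hperp K' hmK'
    -- K' = K ⊔ span {X j}
    have hK'eq : K' = K ⊔ Submodule.span ℝ {X j} := by
      rw [hK', hK, Finset.coe_insert, Set.image_insert_eq, Submodule.span_insert, sup_comm]
    have hsplit0 := orthogonalProjection_sup_span K (X j) w
    have hsplit : (Submodule.orthogonalProjectionOnto K' w : EuclideanSpace ℝ (Fin n))
        = (Submodule.orthogonalProjectionOnto K w : EuclideanSpace ℝ (Fin n))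
          + (Submodule.orthogonalProjectionOnto
              (Submodule.span ℝ {X j - (Submodule.orthogonalProjectionOnto K (X j) : EuclideanSpace ℝ (Fin n))}) w
              : EuclideanSpace ℝ (Fin n)) :=
      (orthogonalProjection_congr hK'eq w).trans hsplit0
    have hv : projPerp X S (X j)
        = X j - (Submodule.orthogonalProjectionOnto K (X j) : EuclideanSpace ℝ (Fin n)) := rfl
    have hP1 := norm_sub_orthogonalProjection_sq K w
    have hP2 := norm_sub_orthogonalProjection_sq K' w
    rw [e1, e2]
    show ‖w - (Submodule.orthogonalProjectionOnto K w : EuclideanSpace ℝ (Fin n))‖ ^ 2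
        - ‖w - (Submodule.orthogonalProjectionOnto K' w : EuclideanSpace ℝ (Fin n))‖ ^ 2 = _
    rw [hP1, hP2, hsplit]
    have horth : ⟪(Submodule.orthogonalProjectionOnto K w : EuclideanSpace ℝ (Fin n)),
        (Submodule.orthogonalProjectionOnto
          (Submodule.span ℝ {X j - (Submodule.orthogonalProjectionOnto K (X j) : EuclideanSpace ℝ (Fin n))}) w
          : EuclideanSpace ℝ (Fin n))⟫ = 0 := by
      have hvK : X j - (Submodule.orthogonalProjectionOnto K (X j) : EuclideanSpace ℝ (Fin n)) ∈ Kᗮ :=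
        Submodule.sub_starProjection_mem_orthogonal (X j)
      have hb : (Submodule.orthogonalProjectionOnto
          (Submodule.span ℝ {X j - (Submodule.orthogonalProjectionOnto K (X j) : EuclideanSpace ℝ (Fin n))}) w
          : EuclideanSpace ℝ (Fin n)) ∈ Kᗮ :=
        (Submodule.span_le.mpr (by simpa using hvK)) (Submodule.orthogonalProjectionOnto _ w).2
      exact hb _ (Submodule.orthogonalProjectionOnto K w).2
    have hadd := norm_add_sq_eq_norm_sq_add_norm_sq_of_inner_eq_zero _ _ horth
    have hspan : (ℝ ∙ projPerp X S (X j))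
        = Submodule.span ℝ {X j - (Submodule.orthogonalProjectionOnto K (X j) : EuclideanSpace ℝ (Fin n))} := by
      rw [hv]
    rw [orthogonalProjection_congr hspan w]
    simp only [sq] at hadd ⊢
    linarith
  constructor
  · intro S j hSS _ _
    exact main S j hSS
  · intro _
    unfold pathDelta
    congr 1
    funext j
    exact main Sstar j.1 (subset_refl _)
end

section
/- Deterministic lower bound on the maximal loss decrement (equation (eq:leftf1)). Let y = Xβ* + w with X ∈ ℝ^{n×p}, and let Ŝ ⊆ {1,…,p} be such that X_Ŝ has full column rank and X_{Ŝ∪{j}} has full column rank for every j ∉ Ŝ; assume ‖Π⊥[Ŝ] X_j‖₂² ≤ n for all j (which holds when ‖X_j‖₂² = n). Let B = S* \ Ŝ be nonempty with k_s = |B|, and define ℛ = X_Bᵀ Π⊥[Ŝ] X_B β*_B ∈ ℝ^{k_s}. Then Δ(Ŝ) ≥ (1/(k_s n)) ( ‖ℛ‖₂² − 2 |⟨ℛ, X_Bᵀ Π⊥[Ŝ] w⟩| ). -/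
open scoped RealInnerProductSpace

section Aux

variable {F : Type*} [NormedAddCommGroup F] [InnerProductSpace ℝ F]

lemma aux_inner_orthProj_self (K : Submodule ℝ F) [Submodule.HasOrthogonalProjection K] (y : F) :
    ⟪y, (Submodule.orthogonalProjectionOnto K y : F)⟫ = ‖(Submodule.orthogonalProjectionOnto K y : F)‖ ^ 2 := by
  have h3 : ⟪y - (Submodule.orthogonalProjectionOnto K y : F), (Submodule.orthogonalProjectionOnto K y : F)⟫ = 0 :=
    Submodule.starProjection_inner_eq_zero (K := K) y _ (Submodule.coe_mem _)
  have h4 := inner_sub_left (𝕜 := ℝ) y (Submodule.orthogonalProjectionOnto K y : F)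
    (Submodule.orthogonalProjectionOnto K y : F)
  have h5 := real_inner_self_eq_norm_sq (Submodule.orthogonalProjectionOnto K y : F)
  rw [h3] at h4; linarith

lemma aux_pyth_orthProj (K : Submodule ℝ F) [Submodule.HasOrthogonalProjection K] (y : F) :
    ‖y - (Submodule.orthogonalProjectionOnto K y : F)‖ ^ 2 = ‖y‖ ^ 2 - ‖(Submodule.orthogonalProjectionOnto K y : F)‖ ^ 2 := by
  rw [norm_sub_sq_real, aux_inner_orthProj_self]; ring

/-- lower bound for the norm of a projection via any element of the subspace -/
lemma aux_orthProj_norm_sq_ge (K : Submodule ℝ F) [Submodule.HasOrthogonalProjection K] (y : F)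
    {z : F} (hz : z ∈ K) :
    2 * ⟪y, z⟫ - ‖z‖ ^ 2 ≤ ‖(Submodule.orthogonalProjectionOnto K y : F)‖ ^ 2 := by
  have h1 : ‖y - (Submodule.orthogonalProjectionOnto K y : F)‖ ≤ ‖y - z‖ := by
    rw [← Submodule.starProjection_apply, Submodule.starProjection_minimal]
    exact ciInf_le ⟨0, by rintro r ⟨x, rfl⟩; positivity⟩ (⟨z, hz⟩ : K)
  have h1' : ‖y - (Submodule.orthogonalProjectionOnto K y : F)‖ ^ 2 ≤ ‖y - z‖ ^ 2 := by
    have := norm_nonneg (y - (Submodule.orthogonalProjectionOnto K y : F)); nlinarith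
  rw [aux_pyth_orthProj] at h1'
  rw [norm_sub_sq_real] at h1'
  linarith

lemma aux_key_ineq (K K' : Submodule ℝ F) [Submodule.HasOrthogonalProjection K] [Submodule.HasOrthogonalProjection K']
    (hKK' : K ≤ K') (y u : F) (huK' : u ∈ K') (huK : u ∈ Kᗮ) (hu : u ≠ 0) :
    ‖(Submodule.orthogonalProjectionOnto K y : F)‖ ^ 2 + ⟪u, y⟫ ^ 2 / ‖u‖ ^ 2
      ≤ ‖(Submodule.orthogonalProjectionOnto K' y : F)‖ ^ 2 := by
  set c : ℝ := ⟪u, y⟫ with hc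
  set z : F := (Submodule.orthogonalProjectionOnto K y : F) + (c / ‖u‖ ^ 2) • u with hzdef
  have hz : z ∈ K' := add_mem (hKK' (Submodule.coe_mem _)) (Submodule.smul_mem _ _ huK')
  have hu2 : ‖u‖ ^ 2 ≠ 0 := pow_ne_zero _ (norm_ne_zero_iff.2 hu)
  have hPu : ⟪(Submodule.orthogonalProjectionOnto K y : F), u⟫ = 0 :=
    (Submodule.mem_orthogonal K u).1 huK _ (Submodule.coe_mem _)
  have hyz : ⟪y, z⟫ = ‖(Submodule.orthogonalProjectionOnto K y : F)‖ ^ 2 + c ^ 2 / ‖u‖ ^ 2 := by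
    rw [hzdef, inner_add_right, aux_inner_orthProj_self, real_inner_smul_right,
      show (inner ℝ y u : ℝ) = c from (real_inner_comm u y).trans hc.symm]
    field_simp
  have hz2 : ‖z‖ ^ 2 = ‖(Submodule.orthogonalProjectionOnto K y : F)‖ ^ 2 + c ^ 2 / ‖u‖ ^ 2 := by
    rw [hzdef, norm_add_sq_real, real_inner_smul_right, hPu, norm_smul]
    rw [mul_pow]
    have habs : |c / ‖u‖ ^ 2| ^ 2 = (c / ‖u‖ ^ 2) ^ 2 := sq_abs _
    rw [Real.norm_eq_abs, habs]
    field_simp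
    ring
  have := aux_orthProj_norm_sq_ge K' y hz
  rw [hyz, hz2] at this
  linarith

end Aux

section ProjPerpLemmas

variable {n p : ℕ} (X : Fin p → EuclideanSpace ℝ (Fin n)) (S : Finset (Fin p))

lemma projPerp_mem_orthogonal (v : EuclideanSpace ℝ (Fin n)) :
    projPerp X S v ∈ (Submodule.span ℝ (X '' ↑S))ᗮ :=
  Submodule.sub_starProjection_mem_orthogonal v

lemma projPerp_eq_zero_of_mem {v : EuclideanSpace ℝ (Fin n)}
    (h : v ∈ Submodule.span ℝ (X '' ↑S)) : projPerp X S v = 0 := by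
  simp [projPerp, Submodule.coe_orthogonalProjectionOnto_apply, Submodule.starProjection_eq_self_iff.2 h]

lemma projPerp_add (v w : EuclideanSpace ℝ (Fin n)) :
    projPerp X S (v + w) = projPerp X S v + projPerp X S w := by
  simp only [projPerp, map_add, Submodule.coe_add]; abel

lemma projPerp_smul (a : ℝ) (v : EuclideanSpace ℝ (Fin n)) :
    projPerp X S (a • v) = a • projPerp X S v := by
  simp only [projPerp, map_smul, Submodule.coe_smul, smul_sub]

lemma projPerp_sum {ι : Type*} (s : Finset ι) (f : ι → EuclideanSpace ℝ (Fin n)) :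
    projPerp X S (∑ i ∈ s, f i) = ∑ i ∈ s, projPerp X S (f i) := by
  classical
  induction s using Finset.induction_on with
  | empty => simp [projPerp]
  | insert _ _ h ih => simp [Finset.sum_insert h, projPerp_add, ih]

lemma inner_projPerp (v z : EuclideanSpace ℝ (Fin n)) :
    ⟪v, projPerp X S z⟫ = ⟪projPerp X S v, projPerp X S z⟫ := by
  have h0 : ⟪(Submodule.orthogonalProjectionOnto (Submodule.span ℝ (X '' ↑S)) v :
      EuclideanSpace ℝ (Fin n)), projPerp X S z⟫ = 0 :=
    projPerp_mem_orthogonal X S z _ (Submodule.coe_mem _)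
  have h4 := inner_sub_left (𝕜 := ℝ) v
    (Submodule.orthogonalProjectionOnto (Submodule.span ℝ (X '' ↑S)) v : EuclideanSpace ℝ (Fin n))
    (projPerp X S z)
  rw [show v - (Submodule.orthogonalProjectionOnto (Submodule.span ℝ (X '' ↑S)) v :
      EuclideanSpace ℝ (Fin n)) = projPerp X S v from rfl, h0, sub_zero] at h4
  linarith [h4]

lemma projPerp_norm_sq (y : EuclideanSpace ℝ (Fin n)) :
    ‖projPerp X S y‖ ^ 2 = ‖y‖ ^ 2 -
      ‖(Submodule.orthogonalProjectionOnto (Submodule.span ℝ (X '' ↑S)) y : EuclideanSpace ℝ (Fin n))‖ ^ 2 :=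
  aux_pyth_orthProj _ y

/-- The key per-coordinate decrement bound. -/
lemma decrement_ge {j : Fin p} (hj : j ∉ S)
    (hu : projPerp X S (X j) ≠ 0) (y : EuclideanSpace ℝ (Fin n)) :
    ⟪X j, projPerp X S y⟫ ^ 2 / ‖projPerp X S (X j)‖ ^ 2
      ≤ ‖projPerp X S y‖ ^ 2 - ‖projPerp X (insert j S) y‖ ^ 2 := by
  set K := Submodule.span ℝ (X '' (↑S : Set (Fin p))) with hK
  set K' := Submodule.span ℝ (X '' (↑(insert j S) : Set (Fin p))) with hK'
  have hKK' : K ≤ K' := by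
    apply Submodule.span_mono
    apply Set.image_mono
    rw [Finset.coe_insert]
    exact Set.subset_insert _ _
  set u := projPerp X S (X j) with hudef
  have hXjK' : X j ∈ K' := Submodule.subset_span ⟨j, by simp, rfl⟩
  have huK' : u ∈ K' := by
    have hP : (Submodule.orthogonalProjectionOnto K (X j) : EuclideanSpace ℝ (Fin n)) ∈ K' :=
      hKK' (Submodule.coe_mem _)
    exact sub_mem hXjK' hP
  have huK : u ∈ Kᗮ := projPerp_mem_orthogonal X S (X j)
  have hkey := aux_key_ineq K K' hKK' y u huK' huK hu
  have hc : ⟪u, y⟫ = ⟪X j, projPerp X S y⟫ := by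
    have e1 := inner_projPerp X S y (X j)
    have e2 := inner_projPerp X S (X j) y
    have e3 := real_inner_comm y (projPerp X S (X j))
    have e5 := real_inner_comm (projPerp X S y) (projPerp X S (X j))
    rw [hudef]
    linarith
  rw [hc] at hkey
  have h1 := projPerp_norm_sq X S y
  have h2 := projPerp_norm_sq X (insert j S) y
  rw [← hK] at h1
  rw [← hK'] at h2
  linarith

end ProjPerpLemmas

/-- **Deterministic lower bound on the maximal loss decrement** (equation (eq:leftf1)).
With `y = Xβ* + w`, `B = S* \ Ŝ` nonempty, `k_s = |B|` and
`ℛ = X_Bᵀ Π⊥[Ŝ] X_B β*_B`, one has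
`Δ(Ŝ) ≥ (1/(k_s n)) (‖ℛ‖² − 2 |⟨ℛ, X_Bᵀ Π⊥[Ŝ] w⟩|)`. -/
theorem delta_lower_bound {n p : ℕ}
    (X : Fin p → EuclideanSpace ℝ (Fin n)) (β : Fin p → ℝ)
    (w y : EuclideanSpace ℝ (Fin n)) (hy : y = (∑ j, β j • X j) + w)
    (Sstar : Finset (Fin p)) (hSstar : ∀ j, j ∈ Sstar ↔ β j ≠ 0)
    (Shat : Finset (Fin p))
    (hShat : LinearIndependent ℝ (fun i : (Shat : Set (Fin p)) => X i))
    (hShatj : ∀ j ∉ Shat,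
      LinearIndependent ℝ (fun i : ((insert j Shat : Finset (Fin p)) : Set (Fin p)) => X i))
    (hXnorm : ∀ j, ‖projPerp X Shat (X j)‖ ^ 2 ≤ (n : ℝ))
    (B : Finset (Fin p)) (hB : B = Sstar \ Shat) (hBne : B.Nonempty)
    (R : {i : Fin p // i ∈ B} → ℝ)
    (hR : ∀ i, R i = ⟪X i.1, projPerp X Shat (∑ j ∈ B.attach, β j.1 • X j.1)⟫) :
    pathDelta X Shat y
      ≥ (1 / (B.card * n)) *
          ((∑ i ∈ B.attach, R i ^ 2)
            - 2 * |∑ i ∈ B.attach, R i * ⟪X i.1, projPerp X Shat w⟫|) := by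
  classical
  set K := Submodule.span ℝ (X '' (↑Shat : Set (Fin p))) with hKdef
  set c : Fin p → ℝ := fun j => ⟪X j, projPerp X Shat y⟫ with hcdef
  set t : Fin p → ℝ := fun j => ⟪X j, projPerp X Shat w⟫ with htdef
  have hBnotin : ∀ j ∈ B, j ∉ Shat := by
    intro j hj; rw [hB] at hj; exact (Finset.mem_sdiff.1 hj).2
  -- nonvanishing of residual columns
  have hu_ne : ∀ j ∉ Shat, projPerp X Shat (X j) ≠ 0 := by
    intro j hj hzero
    have hXjK : X j ∈ K := by
      have h' : X j = (Submodule.orthogonalProjectionOnto K (X j) : EuclideanSpace ℝ (Fin n)) :=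
        sub_eq_zero.1 hzero
      rw [h']; exact Submodule.coe_mem _
    have h := hShatj j hj
    rw [show ((insert j Shat : Finset (Fin p)) : Set (Fin p)) = insert j (↑Shat : Set (Fin p))
      from by simp] at h
    exact ((linearIndepOn_insert (by simpa using hj)).1 h).2 hXjK
  -- n is positive
  obtain ⟨j0, hj0B⟩ := hBne
  have hn_pos : (0 : ℝ) < n := by
    have h1 := hu_ne j0 (hBnotin j0 hj0B)
    have h2 : (0 : ℝ) < ‖projPerp X Shat (X j0)‖ ^ 2 := pow_pos (norm_pos_iff.mpr h1) 2
    exact lt_of_lt_of_le h2 (hXnorm j0)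
  have hk_pos : (0 : ℝ) < B.card := by
    exact_mod_cast Finset.card_pos.2 ⟨j0, hj0B⟩
  have hkn_pos : (0 : ℝ) < (B.card : ℝ) * n := mul_pos hk_pos hn_pos
  -- pathDelta dominates each decrement
  have hbdd : BddAbove (Set.range fun j : {j : Fin p // j ∉ Shat} =>
      (‖projPerp X Shat y‖ ^ 2 - ‖projPerp X (insert j.1 Shat) y‖ ^ 2)) := by
    refine ⟨‖projPerp X Shat y‖ ^ 2, ?_⟩
    rintro r ⟨j, rfl⟩
    dsimp only
    have : (0:ℝ) ≤ ‖projPerp X (insert j.1 Shat) y‖ ^ 2 := by positivity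
    linarith
  have hΔ : ∀ j ∈ B, c j ^ 2 / n ≤ pathDelta X Shat y := by
    intro j hj
    have hjS := hBnotin j hj
    have h1 := decrement_ge X Shat hjS (hu_ne j hjS) y
    have h2 : c j ^ 2 / n ≤ c j ^ 2 / ‖projPerp X Shat (X j)‖ ^ 2 := by
      exact div_le_div_of_nonneg_left (by positivity)
        (pow_pos (norm_pos_iff.mpr (hu_ne j hjS)) 2) (hXnorm j)
    have h3 : (‖projPerp X Shat y‖ ^ 2 - ‖projPerp X (insert j Shat) y‖ ^ 2)
        ≤ pathDelta X Shat y := le_ciSup hbdd ⟨j, hjS⟩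
    calc c j ^ 2 / n ≤ c j ^ 2 / ‖projPerp X Shat (X j)‖ ^ 2 := h2
      _ ≤ ‖projPerp X Shat y‖ ^ 2 - ‖projPerp X (insert j Shat) y‖ ^ 2 := h1
      _ ≤ pathDelta X Shat y := h3
  -- sum over B
  have hsum : (∑ j ∈ B, c j ^ 2) ≤ (B.card : ℝ) * n * pathDelta X Shat y := by
    have h1 : (∑ j ∈ B, c j ^ 2 / n) ≤ ∑ _j ∈ B, pathDelta X Shat y :=
      Finset.sum_le_sum hΔ
    rw [Finset.sum_const, nsmul_eq_mul] at h1
    rw [← Finset.sum_div] at h1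
    rw [div_le_iff₀ hn_pos] at h1
    nlinarith [h1]
  -- decompose c = R + t on B
  set v := ∑ j ∈ B.attach, β j.1 • X j.1 with hvdef
  have hprojy : projPerp X Shat y = projPerp X Shat v + projPerp X Shat w := by
    rw [hy, projPerp_add]
    congr 1
    have hXK : ∀ j ∈ Shat, X j ∈ K := fun j hj =>
      Submodule.subset_span ⟨j, by simpa using hj, rfl⟩
    have hall : projPerp X Shat (∑ j, β j • X j)
        = ∑ j ∈ Finset.univ, β j • projPerp X Shat (X j) := by
      rw [projPerp_sum]
      exact Finset.sum_congr rfl fun j _ => projPerp_smul X Shat (β j) (X j)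
    have hBsub : B ⊆ Finset.univ := Finset.subset_univ B
    have hzero : ∀ j ∈ Finset.univ, j ∉ B → β j • projPerp X Shat (X j) = 0 := by
      intro j _ hjB
      rw [hB, Finset.mem_sdiff] at hjB
      push_neg at hjB
      by_cases hjS : j ∈ Sstar
      · rw [projPerp_eq_zero_of_mem X Shat (hXK j (hjB hjS)), smul_zero]
      · rw [show β j = 0 from by_contra fun hne => hjS ((hSstar j).2 hne), zero_smul]
    have hv : projPerp X Shat v = ∑ j ∈ B, β j • projPerp X Shat (X j) := by
      rw [hvdef, projPerp_sum]
      rw [← Finset.sum_attach B fun j => β j • projPerp X Shat (X j)]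
      exact Finset.sum_congr rfl fun j _ => projPerp_smul X Shat (β j.1) (X j.1)
    rw [hall, hv, Finset.sum_subset hBsub (fun j hj hjB => hzero j hj hjB)]
  have hct : ∀ i : {i : Fin p // i ∈ B}, c i.1 = R i + t i := by
    intro i
    rw [hcdef]
    simp only
    rw [hprojy, inner_add_right, hR i, htdef]
  -- algebra
  have hattach : (∑ j ∈ B, c j ^ 2) = ∑ i ∈ B.attach, c i.1 ^ 2 :=
    (Finset.sum_attach B fun j => c j ^ 2).symm
  have hexp : (∑ i ∈ B.attach, c i.1 ^ 2)
      = (∑ i ∈ B.attach, R i ^ 2) + 2 * (∑ i ∈ B.attach, R i * t i)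
        + (∑ i ∈ B.attach, t i ^ 2) := by
    rw [Finset.mul_sum, ← Finset.sum_add_distrib, ← Finset.sum_add_distrib]
    exact Finset.sum_congr rfl fun i _ => by rw [hct i]; ring
  have htsq : (0:ℝ) ≤ ∑ i ∈ B.attach, t i ^ 2 :=
    Finset.sum_nonneg fun i _ => by positivity
  have habs : -(|∑ i ∈ B.attach, R i * t i|) ≤ ∑ i ∈ B.attach, R i * t i :=
    neg_abs_le _
  have hlow : (∑ i ∈ B.attach, R i ^ 2) - 2 * |∑ i ∈ B.attach, R i * t i|
      ≤ ∑ j ∈ B, c j ^ 2 := by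
    rw [hattach, hexp]; linarith
  -- conclude
  rw [ge_iff_le]
  have hfinal : (∑ i ∈ B.attach, R i ^ 2) - 2 * |∑ i ∈ B.attach, R i * t i|
      ≤ (B.card : ℝ) * n * pathDelta X Shat y := le_trans hlow hsum
  rw [div_mul_eq_mul_div, one_mul, div_le_iff₀ hkn_pos]
  calc (∑ i ∈ B.attach, R i ^ 2) - 2 * |∑ i ∈ B.attach, R i * t i|
      ≤ (B.card : ℝ) * n * pathDelta X Shat y := hfinal
    _ = pathDelta X Shat y * ((B.card : ℝ) * n) := by ring
end
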